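/- For any θ > 1, p > 0, λ > 0, the GLL cdf F(x;θ,λ,p) is neither convex nor concave on (0,1): there exist points x where F''(x) < 0 and points where F''(x) > 0. -/

import Mathlib

open Real MeasureTheory

/-- The generalized Log-Lindley (GLL) density. -/
noncomputable def gll (θ lam p x : ℝ) : ℝ :=
  θ ^ (2 + p) / (Real.Gamma (1 + p) * (1 + p + lam * θ)) *
    (-Real.log x) ^ p * (lam - Real.log x) * x ^ (θ - 1)

lemma gll_hasDerivAt (θ lam p : ℝ) (hp : 0 < p) {x : ℝ} (hx0 : 0 < x) (hx1 : x < 1) :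
    HasDerivAt (gll θ lam p)
      (θ ^ (2 + p) / (Real.Gamma (1 + p) * (1 + p + lam * θ)) * x⁻¹ * x ^ (θ - 1) *
        (-Real.log x) ^ (p - 1) *
        ((θ - 1) * (-Real.log x) * (lam - Real.log x) - p * (lam - Real.log x)
          - (-Real.log x))) x := by
  set C := θ ^ (2 + p) / (Real.Gamma (1 + p) * (1 + p + lam * θ)) with hCdef
  have hu0 : 0 < -Real.log x := neg_pos.mpr (Real.log_neg hx0 hx1)
  have hlog : HasDerivAt Real.log x⁻¹ x := Real.hasDerivAt_log hx0.ne'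
  have hu : HasDerivAt (fun y => -Real.log y) (-x⁻¹) x := hlog.neg
  have hup : HasDerivAt (fun y => (-Real.log y) ^ p)
      (p * (-Real.log x) ^ (p - 1) * -x⁻¹) x := by
    have h2 := Real.hasDerivAt_rpow_const (x := -Real.log x) (p := p) (Or.inl hu0.ne')
    exact h2.comp x hu
  have hv : HasDerivAt (fun y => lam - Real.log y) (0 - x⁻¹) x :=
    (hasDerivAt_const x lam).sub hlog
  have hw : HasDerivAt (fun y => y ^ (θ - 1)) ((θ - 1) * x ^ (θ - 1 - 1)) x :=
    Real.hasDerivAt_rpow_const (Or.inl hx0.ne')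
  have H := ((hup.const_mul C).mul hv).mul hw
  have hgll : gll θ lam p = fun y =>
      C * (-Real.log y) ^ p * (lam - Real.log y) * y ^ (θ - 1) := rfl
  rw [hgll]
  refine H.congr_deriv ?_
  have e1 : (-Real.log x) ^ p = (-Real.log x) ^ (p - 1) * (-Real.log x) := by
    rw [← Real.rpow_add_one hu0.ne' (p - 1), sub_add_cancel]
  have e2 : x ^ (θ - 1) = x ^ (θ - 1 - 1) * x := by
    rw [← Real.rpow_add_one hx0.ne' (θ - 1 - 1), sub_add_cancel]
  simp only [Pi.mul_apply]
  rw [e1, e2]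
  field_simp
  ring

lemma gll_continuousOn (θ lam p : ℝ) (hp : 0 < p) :
    ContinuousOn (gll θ lam p) (Set.Ioi 0) := by
  have hgll : gll θ lam p = fun y =>
      θ ^ (2 + p) / (Real.Gamma (1 + p) * (1 + p + lam * θ)) *
      (-Real.log y) ^ p * (lam - Real.log y) * y ^ (θ - 1) := rfl
  rw [hgll]
  have hlog : ContinuousOn Real.log (Set.Ioi (0:ℝ)) :=
    Real.continuousOn_log.mono (fun x hx => ne_of_gt hx)
  exact (((continuousOn_const.mul (hlog.neg.rpow_const (fun x _ => Or.inr hp.le))).mul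
    (continuousOn_const.sub hlog)).mul
    (continuousOn_id.rpow_const (fun x hx => Or.inl (ne_of_gt hx))))

lemma gll_pos (θ lam p : ℝ) (hθ : 1 < θ) (hp : 0 < p) (hlam : 0 < lam) {x : ℝ}
    (hx0 : 0 < x) (hx1 : x < 1) : 0 < gll θ lam p x := by
  have hθ0 : (0:ℝ) < θ := by linarith
  have hu0 : 0 < -Real.log x := neg_pos.mpr (Real.log_neg hx0 hx1)
  have hC : 0 < θ ^ (2 + p) / (Real.Gamma (1 + p) * (1 + p + lam * θ)) := by
    apply div_pos (Real.rpow_pos_of_pos hθ0 _)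
    exact mul_pos (Real.Gamma_pos_of_pos (by linarith)) (by nlinarith)
  have : 0 < lam - Real.log x := by nlinarith
  exact mul_pos (mul_pos (mul_pos hC (Real.rpow_pos_of_pos hu0 _)) this)
    (Real.rpow_pos_of_pos hx0 _)

lemma gll_integrableOn (θ lam p : ℝ) (hθ : 1 < θ) (hp : 0 < p) (hlam : 0 < lam) :
    IntegrableOn (gll θ lam p) (Set.Ioo 0 1) := by
  have hθ0 : (0:ℝ) < θ := by linarith
  set C := θ ^ (2 + p) / (Real.Gamma (1 + p) * (1 + p + lam * θ)) with hCdef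
  have hC : 0 < C := by
    apply div_pos (Real.rpow_pos_of_pos hθ0 _)
    exact mul_pos (Real.Gamma_pos_of_pos (by linarith)) (by nlinarith)
  set c := (θ - 1) / 2 with hcdef
  have hc : 0 < c := by simp only [hcdef]; linarith
  set G := fun u : ℝ => u ^ p * ((lam + u) * Real.exp (-c * u)) with hGdef
  -- G is bounded on [0, ∞)
  have htend : Filter.Tendsto G Filter.atTop (nhds 0) := by
    have h1 := (tendsto_rpow_mul_exp_neg_mul_atTop_nhds_zero p c hc).const_mul lam
    have h2 := tendsto_rpow_mul_exp_neg_mul_atTop_nhds_zero (p + 1) c hc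
    have h3 := h1.add h2
    rw [mul_zero, add_zero] at h3
    apply h3.congr'
    filter_upwards [Filter.eventually_gt_atTop (0:ℝ)] with u hu
    rw [Real.rpow_add_one hu.ne' p]
    ring
  obtain ⟨R, hR⟩ : ∃ R : ℝ, ∀ u ≥ R, G u ≤ 1 := by
    have := htend.eventually (eventually_le_nhds one_pos)
    exact Filter.eventually_atTop.mp this
  have hGcont : ContinuousOn G (Set.Icc 0 R) := by
    apply ContinuousOn.mul
    · exact continuousOn_id.rpow_const (fun x _ => Or.inr hp.le)
    · exact (continuousOn_const.add continuousOn_id).mul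
        (Real.continuous_exp.comp_continuousOn
          ((continuousOn_const (c := -c)).mul continuousOn_id))
  obtain ⟨K₀, hK₀⟩ := (isCompact_Icc (a := (0:ℝ)) (b := R)).exists_bound_of_continuousOn hGcont
  set K := max K₀ 1 with hKdef
  have hK : ∀ u : ℝ, 0 ≤ u → G u ≤ K := by
    intro u hu
    rcases le_total u R with h | h
    · exact le_trans (le_trans (le_abs_self _) (hK₀ u ⟨hu, h⟩)) (le_max_left _ _)
    · exact le_trans (hR u h) (le_max_right _ _)
  have hK0 : 0 ≤ K := le_trans zero_le_one (le_max_right _ _)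
  -- key pointwise identity and bound on (0, 1/2]
  have hbound : ∀ t ∈ Set.Ioc (0:ℝ) (1/2), ‖gll θ lam p t‖ ≤ C * K := by
    intro t ⟨ht0, ht1⟩
    have ht1' : t < 1 := lt_of_le_of_lt ht1 (by norm_num)
    have hu0 : 0 < -Real.log t := neg_pos.mpr (Real.log_neg ht0 ht1')
    have e3 : Real.exp (-c * -Real.log t) = t ^ c := by
      rw [Real.rpow_def_of_pos ht0]; congr 1; ring
    have key : gll θ lam p t = C * G (-Real.log t) * t ^ c := by
      have : gll θ lam p t =
          C * (-Real.log t) ^ p * (lam - Real.log t) * t ^ (θ - 1) := rfl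
      rw [this, show θ - 1 = c + c by rw [hcdef]; ring, Real.rpow_add ht0, hGdef, ← e3]
      ring
    have htc0 : 0 < t ^ c := Real.rpow_pos_of_pos ht0 _
    have htc1 : t ^ c ≤ 1 := Real.rpow_le_one ht0.le (by linarith) hc.le
    have hGnn : 0 ≤ G (-Real.log t) :=
      mul_nonneg (Real.rpow_nonneg hu0.le _)
        (mul_nonneg (by linarith) (Real.exp_nonneg _))
    have hgnn : 0 ≤ gll θ lam p t := by
      rw [key]; positivity
    rw [Real.norm_eq_abs, abs_of_nonneg hgnn, key]
    calc C * G (-Real.log t) * t ^ c ≤ C * K * t ^ c := by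
          apply mul_le_mul_of_nonneg_right _ htc0.le
          exact mul_le_mul_of_nonneg_left (hK _ hu0.le) hC.le
      _ ≤ C * K * 1 := by
          apply mul_le_mul_of_nonneg_left htc1 (by positivity)
      _ = C * K := mul_one _
  have part2 : IntegrableOn (gll θ lam p) (Set.Ioc 0 (1/2)) := by
    refine ⟨((gll_continuousOn θ lam p hp).mono (fun x hx => hx.1)).aestronglyMeasurable
      measurableSet_Ioc, HasFiniteIntegral.restrict_of_bounded (C := C * K)
      measure_Ioc_lt_top ?_⟩
    rw [MeasureTheory.ae_restrict_iff' measurableSet_Ioc]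
    exact Filter.Eventually.of_forall hbound
  have part1 : IntegrableOn (gll θ lam p) (Set.Icc (1/2) 1) := by
    apply ContinuousOn.integrableOn_Icc
    exact (gll_continuousOn θ lam p hp).mono (fun x hx => lt_of_lt_of_le (by norm_num) hx.1)
  apply (part2.union part1).mono_set
  intro x ⟨h0, h1⟩
  rcases le_total x (1/2) with h | h
  · exact Or.inl ⟨h0, h⟩
  · exact Or.inr ⟨h, h1.le⟩

lemma F_hasDerivAt (θ lam p : ℝ) (hθ : 1 < θ) (hp : 0 < p) (hlam : 0 < lam) {a : ℝ}
    (ha : a ∈ Set.Ioo (0:ℝ) 1) :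
    HasDerivAt (fun x => ∫ t in Set.Ioo (0:ℝ) x, gll θ lam p t) (gll θ lam p a) a := by
  obtain ⟨ha0, ha1⟩ := ha
  have hint : IntervalIntegrable (gll θ lam p) volume 0 a :=
    (intervalIntegrable_iff_integrableOn_Ioo_of_le ha0.le).mpr
      ((gll_integrableOn θ lam p hθ hp hlam).mono_set
        (Set.Ioo_subset_Ioo le_rfl ha1.le))
  have hcont := gll_continuousOn θ lam p hp
  have hca : ContinuousAt (gll θ lam p) a :=
    hcont.continuousAt (isOpen_Ioi.mem_nhds ha0)
  have hmeas : StronglyMeasurableAtFilter (gll θ lam p) (nhds a) volume :=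
    hcont.stronglyMeasurableAtFilter isOpen_Ioi a ha0
  have hd := intervalIntegral.integral_hasDerivAt_right hint hmeas hca
  apply hd.congr_of_eventuallyEq
  filter_upwards [isOpen_Ioi.mem_nhds (show a ∈ Set.Ioi (0:ℝ) from ha0)] with x hx
  rw [intervalIntegral.integral_of_le (le_of_lt hx), MeasureTheory.integral_Ioc_eq_integral_Ioo]

lemma deriv_nonneg_of_monotoneOn {f : ℝ → ℝ} {x d : ℝ} {s : Set ℝ} (hs : IsOpen s)
    (hxs : x ∈ s) (hm : MonotoneOn f s) (hd : HasDerivAt f d x) : 0 ≤ d := by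
  have ht := hasDerivAt_iff_tendsto_slope.mp hd
  refine ge_of_tendsto ht ?_
  filter_upwards [self_mem_nhdsWithin, mem_nhdsWithin_of_mem_nhds (hs.mem_nhds hxs)]
    with y hy hys
  have hyne : y ≠ x := hy
  rw [slope_def_field]
  rcases lt_or_gt_of_ne hyne with h | h
  · have : f y ≤ f x := hm hys hxs h.le
    have h2 : y - x < 0 := by linarith
    have h3 : f y - f x ≤ 0 := by linarith
    have := div_nonneg (neg_nonneg.mpr h3) (neg_nonneg.mpr h2.le)
    rw [neg_div_neg_eq] at this
    linarith
  · have : f x ≤ f y := hm hxs hys h.le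
    have := div_nonneg (by linarith : 0 ≤ f y - f x) (by linarith : 0 ≤ y - x)
    linarith

theorem gll_cdf_neither_convex_nor_concave (θ lam p : ℝ)
    (hθ : 1 < θ) (hp : 0 < p) (hlam : 0 < lam) :
    ¬ ConvexOn ℝ (Set.Ioo 0 1) (fun x => ∫ t in Set.Ioo (0:ℝ) x, gll θ lam p t) ∧
    ¬ ConcaveOn ℝ (Set.Ioo 0 1) (fun x => ∫ t in Set.Ioo (0:ℝ) x, gll θ lam p t) ∧
    (∃ x ∈ Set.Ioo (0:ℝ) 1, deriv (gll θ lam p) x < 0) ∧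
    (∃ y ∈ Set.Ioo (0:ℝ) 1, 0 < deriv (gll θ lam p) y) := by
  have hθ1 : (0:ℝ) < θ - 1 := by linarith
  have hC : 0 < θ ^ (2 + p) / (Real.Gamma (1 + p) * (1 + p + lam * θ)) := by
    apply div_pos (Real.rpow_pos_of_pos (by linarith) _)
    exact mul_pos (Real.Gamma_pos_of_pos (by linarith)) (by nlinarith)
  -- a point with negative derivative of the density
  obtain ⟨x, hxmem, dx, hdx, hdxneg⟩ : ∃ x ∈ Set.Ioo (0:ℝ) 1, ∃ d,
      HasDerivAt (gll θ lam p) d x ∧ d < 0 := by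
    set u := min 1 (p * lam / (2 * (θ - 1) * (lam + 1))) with hu
    have hu0 : 0 < u := lt_min one_pos (by positivity)
    have hu1 : u ≤ 1 := min_le_left _ _
    have hu2 : u ≤ p * lam / (2 * (θ - 1) * (lam + 1)) := min_le_right _ _
    set x := Real.exp (-u) with hxdef
    have hx0 : 0 < x := Real.exp_pos _
    have hx1 : x < 1 := by rw [Real.exp_lt_one_iff]; linarith
    have hlogx : Real.log x = -u := Real.log_exp _
    refine ⟨x, ⟨hx0, hx1⟩, _, gll_hasDerivAt θ lam p hp hx0 hx1, ?_⟩
    rw [hlogx]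
    have hpre : 0 < θ ^ (2 + p) / (Real.Gamma (1 + p) * (1 + p + lam * θ)) * x⁻¹ *
        x ^ (θ - 1) * (- -u) ^ (p - 1) := by
      rw [neg_neg]
      exact mul_pos (mul_pos (mul_pos hC (inv_pos.mpr hx0))
        (Real.rpow_pos_of_pos hx0 _)) (Real.rpow_pos_of_pos hu0 _)
    apply mul_neg_of_pos_of_neg hpre
    simp only [neg_neg, sub_neg_eq_add]
    have hposmul : 0 < (θ - 1) * (lam + 1) := mul_pos hθ1 (by linarith)
    have h3 : (θ - 1) * (lam + 1) * u ≤ p * lam / 2 := by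
      calc (θ - 1) * (lam + 1) * u
          ≤ (θ - 1) * (lam + 1) * (p * lam / (2 * (θ - 1) * (lam + 1))) :=
            mul_le_mul_of_nonneg_left hu2 hposmul.le
        _ = p * lam / 2 := by field_simp
    have h4 : (θ - 1) * u * (lam + u) ≤ (θ - 1) * u * (lam + 1) :=
      mul_le_mul_of_nonneg_left (by linarith) (mul_nonneg hθ1.le hu0.le)
    have h5 : (θ - 1) * u * (lam + 1) = (θ - 1) * (lam + 1) * u := by ring
    have h6 : p * lam ≤ p * (lam + u) := by nlinarith
    have hplam : 0 < p * lam := mul_pos hp hlam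
    linarith
  -- a point with positive derivative of the density
  obtain ⟨y, hymem, dy, hdy, hdypos⟩ : ∃ y ∈ Set.Ioo (0:ℝ) 1, ∃ d,
      HasDerivAt (gll θ lam p) d y ∧ 0 < d := by
    set M := (p + 2) / (θ - 1) with hM
    have hM0 : 0 < M := div_pos (by linarith) hθ1
    set y := Real.exp (-M) with hydef
    have hy0 : 0 < y := Real.exp_pos _
    have hy1 : y < 1 := by rw [Real.exp_lt_one_iff]; linarith
    have hlogy : Real.log y = -M := Real.log_exp _
    refine ⟨y, ⟨hy0, hy1⟩, _, gll_hasDerivAt θ lam p hp hy0 hy1, ?_⟩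
    rw [hlogy]
    have hpre : 0 < θ ^ (2 + p) / (Real.Gamma (1 + p) * (1 + p + lam * θ)) * y⁻¹ *
        y ^ (θ - 1) * (- -M) ^ (p - 1) := by
      rw [neg_neg]
      exact mul_pos (mul_pos (mul_pos hC (inv_pos.mpr hy0))
        (Real.rpow_pos_of_pos hy0 _)) (Real.rpow_pos_of_pos hM0 _)
    apply mul_pos hpre
    simp only [neg_neg, sub_neg_eq_add]
    have h1 : (θ - 1) * M = p + 2 := by
      rw [hM]; field_simp
    have h2 : (θ - 1) * M * (lam + M) - p * (lam + M) - M = 2 * lam + M := by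
      rw [h1]; ring
    linarith
  refine ⟨?_, ?_, ⟨x, hxmem, by rw [hdx.deriv]; exact hdxneg⟩,
    ⟨y, hymem, by rw [hdy.deriv]; exact hdypos⟩⟩
  · intro h
    have hdiff : ∀ z ∈ Set.Ioo (0:ℝ) 1, DifferentiableAt ℝ
        (fun x => ∫ t in Set.Ioo (0:ℝ) x, gll θ lam p t) z :=
      fun z hz => (F_hasDerivAt θ lam p hθ hp hlam hz).differentiableAt
    have hmono := h.monotoneOn_deriv hdiff
    have hmono' : MonotoneOn (gll θ lam p) (Set.Ioo 0 1) := by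
      intro a ha b hb hab
      have := hmono ha hb hab
      rwa [(F_hasDerivAt θ lam p hθ hp hlam ha).deriv,
        (F_hasDerivAt θ lam p hθ hp hlam hb).deriv] at this
    have := deriv_nonneg_of_monotoneOn isOpen_Ioo hxmem hmono' hdx
    linarith
  · intro h
    have hdiff : ∀ z ∈ Set.Ioo (0:ℝ) 1, DifferentiableAt ℝ
        (fun x => ∫ t in Set.Ioo (0:ℝ) x, gll θ lam p t) z :=
      fun z hz => (F_hasDerivAt θ lam p hθ hp hlam hz).differentiableAt
    have hanti := h.antitoneOn_deriv hdiff
    have hanti' : AntitoneOn (gll θ lam p) (Set.Ioo 0 1) := by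
      intro a ha b hb hab
      have := hanti ha hb hab
      rwa [(F_hasDerivAt θ lam p hθ hp hlam ha).deriv,
        (F_hasDerivAt θ lam p hθ hp hlam hb).deriv] at this
    have hmono'' : MonotoneOn (fun z => -(gll θ lam p z)) (Set.Ioo 0 1) :=
      fun a ha b hb hab => neg_le_neg (hanti' ha hb hab)
    have := deriv_nonneg_of_monotoneOn isOpen_Ioo hymem hmono'' hdy.neg
    linarith
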